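/- (Orthogonality of eigenfunctions, continuous ABR case) Let 0 < α < 1, p, q, r : [a,b] → ℝ continuous with p > 0 and r > 0. Let λ₁ ≠ λ₂ be real numbers and x₁, x₂ real-valued functions satisfying ^{ABR}_a D^α (p · ^{ABR}D_b^α xᵢ) + q xᵢ = λᵢ r xᵢ on (a,b), i = 1,2, with enough regularity for the ABR integration by parts formula. Then ∫_a^b r(t) x₁(t) x₂(t) dt = 0. -/

import Mathlib

open intervalIntegral

/-- One-parameter Mittag-Leffler function. -/
noncomputable def mittagLeffler (α z : ℝ) : ℝ :=
  ∑' k : ℕ, z ^ k / Real.Gamma (α * k + 1)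

/-- Left ABR fractional derivative with Mittag-Leffler kernel. -/
noncomputable def ABRleft (B α a : ℝ) (f : ℝ → ℝ) (t : ℝ) : ℝ :=
  (B / (1 - α)) *
    deriv (fun x => ∫ s in a..x, f s * mittagLeffler α (-(α / (1 - α)) * (x - s) ^ α)) t

/-- Right ABR fractional derivative with Mittag-Leffler kernel. -/
noncomputable def ABRright (B α b : ℝ) (f : ℝ → ℝ) (t : ℝ) : ℝ :=
  -(B / (1 - α)) *
    deriv (fun x => ∫ s in x..b, f s * mittagLeffler α (-(α / (1 - α)) * (s - x) ^ α)) t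

/-- The fractional Sturm–Liouville operator `L₁`. -/
noncomputable def SLop (B α a b : ℝ) (p q : ℝ → ℝ) (x : ℝ → ℝ) (t : ℝ) : ℝ :=
  ABRleft B α a (fun s => p s * ABRright B α b x s) t + q t * x t

/-- Orthogonality of eigenfunctions corresponding to distinct eigenvalues for the
continuous ABR fractional Sturm–Liouville equation; regularity is encoded in the
integration by parts hypotheses `h12`, `h21`. -/
theorem SL_eigenfunctions_orthogonal (a b α B : ℝ) (hab : a < b)
    (hα0 : 0 < α) (hα1 : α < 1) (hB : 0 < B)
    (p q r : ℝ → ℝ) (hp : ContinuousOn p (Set.Icc a b)) (hq : ContinuousOn q (Set.Icc a b))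
    (hr : ContinuousOn r (Set.Icc a b))
    (hppos : ∀ t ∈ Set.Icc a b, 0 < p t) (hrpos : ∀ t ∈ Set.Icc a b, 0 < r t)
    (lam₁ lam₂ : ℝ) (hlam : lam₁ ≠ lam₂) (x₁ x₂ : ℝ → ℝ)
    (heq₁ : ∀ t ∈ Set.Ioo a b, SLop B α a b p q x₁ t = lam₁ * r t * x₁ t)
    (heq₂ : ∀ t ∈ Set.Ioo a b, SLop B α a b p q x₂ t = lam₂ * r t * x₂ t)
    (h12 : (∫ t in a..b, x₂ t * ABRleft B α a (fun s => p s * ABRright B α b x₁ s) t)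
          = ∫ t in a..b, (p t * ABRright B α b x₁ t) * ABRright B α b x₂ t)
    (h21 : (∫ t in a..b, x₁ t * ABRleft B α a (fun s => p s * ABRright B α b x₂ s) t)
          = ∫ t in a..b, (p t * ABRright B α b x₂ t) * ABRright B α b x₁ t) :
    (∫ t in a..b, r t * x₁ t * x₂ t) = 0 := by
  by_cases hg : IntervalIntegrable (fun t => r t * x₁ t * x₂ t) MeasureTheory.volume a b
  swap
  · exact intervalIntegral.integral_undef hg
  have hab' : a ≤ b := hab.le
  have huIcc : Set.uIcc a b = Set.Icc a b := Set.uIcc_of_le hab'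
  have hrne : ∀ t ∈ Set.Icc a b, r t ≠ 0 := fun t ht => (hrpos t ht).ne'
  -- integrability of the two modified integrands
  have key : ∀ lam : ℝ, IntervalIntegrable
      (fun t => lam * (r t * x₁ t * x₂ t) - q t * x₁ t * x₂ t) MeasureTheory.volume a b := by
    intro lam
    have hcont : ContinuousOn (fun t => lam - q t / r t) (Set.uIcc a b) := by
      rw [huIcc]
      exact continuousOn_const.sub (hq.div hr hrne)
    have h1 := hg.mul_continuousOn hcont
    apply h1.congr
    have hmem := MeasureTheory.ae_restrict_mem (α := ℝ) measurableSet_Ioc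
      (μ := MeasureTheory.volume) (s := Set.Ioc a b)
    rw [Set.uIoc_of_le hab']
    intro t ht
    have htIcc : t ∈ Set.Icc a b := Set.Ioc_subset_Icc_self ht
    have hrt := hrne t htIcc
    field_simp
  -- rewrite the LHS of h12 using the eigenvalue equation
  have haecong : ∀ (lam : ℝ) (x y : ℝ → ℝ),
      (∀ t ∈ Set.Ioo a b, SLop B α a b p q x t = lam * r t * x t) →
      (∫ t in a..b, y t * ABRleft B α a (fun s => p s * ABRright B α b x s) t)
        = ∫ t in a..b, lam * (r t * x t * y t) - q t * x t * y t := by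
    intro lam x y heq
    apply intervalIntegral.integral_congr_ae
    have hb : ∀ᵐ t : ℝ, t ≠ b := by
      refine MeasureTheory.ae_iff.2 ?_
      simpa using MeasureTheory.measure_singleton (α := ℝ) b
    filter_upwards [hb] with t htb ht
    rw [Set.uIoc_of_le hab'] at ht
    have htoo : t ∈ Set.Ioo a b := ⟨ht.1, lt_of_le_of_ne ht.2 htb⟩
    have := heq t htoo
    unfold SLop at this
    have hA : ABRleft B α a (fun s => p s * ABRright B α b x s) t
        = lam * r t * x t - q t * x t := by linarith
    rw [hA]; ring
  have H1 := haecong lam₁ x₁ x₂ heq₁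
  have H2 := haecong lam₂ x₂ x₁ heq₂
  -- RHS of h12 and h21 agree
  have hRHS : (∫ t in a..b, (p t * ABRright B α b x₁ t) * ABRright B α b x₂ t)
      = ∫ t in a..b, (p t * ABRright B α b x₂ t) * ABRright B α b x₁ t := by
    apply intervalIntegral.integral_congr
    intro t _
    ring
  -- the two modified integrals (with integrands symmetric in x₁,x₂) are equal
  have hI : (∫ t in a..b, lam₁ * (r t * x₁ t * x₂ t) - q t * x₁ t * x₂ t)
      = ∫ t in a..b, lam₂ * (r t * x₁ t * x₂ t) - q t * x₁ t * x₂ t := by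
    have e1 : (∫ t in a..b, lam₁ * (r t * x₁ t * x₂ t) - q t * x₁ t * x₂ t)
        = ∫ t in a..b, lam₂ * (r t * x₂ t * x₁ t) - q t * x₂ t * x₁ t := by
      rw [← H1, ← H2, h12, h21, hRHS]
    rw [e1]
    apply intervalIntegral.integral_congr
    intro t _
    ring
  have hsub := intervalIntegral.integral_sub (key lam₁) (key lam₂)
  rw [hI, sub_self] at hsub
  have hval : (∫ t in a..b, ((lam₁ * (r t * x₁ t * x₂ t) - q t * x₁ t * x₂ t)
      - (lam₂ * (r t * x₁ t * x₂ t) - q t * x₁ t * x₂ t)))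
      = (lam₁ - lam₂) * ∫ t in a..b, r t * x₁ t * x₂ t := by
    rw [← intervalIntegral.integral_const_mul]
    apply intervalIntegral.integral_congr
    intro t _
    ring
  rw [hval] at hsub
  rcases mul_eq_zero.1 hsub with h | h
  · exact absurd (sub_eq_zero.1 h) hlam
  · exact h
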